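/- Let T > 0. Let K¹, K² : [0,T] → ℝ be continuous nondecreasing functions with K¹(0) = K²(0) = 0, and let V¹, V², G : [0,T] → ℝ be bounded measurable functions such that V¹_u ≥ G_u and V²_u ≥ G_u for all u ∈ [0,T], and such that ∫_0^T (V¹_u − G_u) dK¹_u = 0 and ∫_0^T (V²_u − G_u) dK²_u = 0, where the integrals are Lebesgue–Stieltjes integrals with respect to the measures induced by K¹ and K². Then for every t ∈ [0,T], ∫_t^T (V¹_u − V²_u) dK¹_u − ∫_t^T (V¹_u − V²_u) dK²_u ≤ 0. -/

import Mathlib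

open MeasureTheory Set

private lemma intOn_aux (T : ℝ) (K : StieltjesFunction ℝ) (f : ℝ → ℝ) (C : ℝ)
    (hfm : Measurable f) (hfb : ∀ u ∈ Set.Icc 0 T, |f u| ≤ C)
    {a b : ℝ} (hab : Set.Ioc a b ⊆ Set.Icc 0 T) :
    IntegrableOn f (Set.Ioc a b) K.measure := by
  apply Measure.integrableOn_of_bounded (M := C)
  · rw [K.measure_Ioc]; exact ENNReal.ofReal_ne_top
  · exact hfm.aestronglyMeasurable
  · exact (ae_restrict_iff' measurableSet_Ioc).2
      (Filter.Eventually.of_forall fun u hu => hfb u (hab hu))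

/-- If a nonnegative (on `Icc 0 T`) function has zero integral on `Ioc 0 T`,
then its integral on `Ioc t T` (for `t ∈ Icc 0 T`) is zero. -/
private lemma skorokhod_aux (T : ℝ) (K : StieltjesFunction ℝ) (f : ℝ → ℝ) (C : ℝ)
    (hfm : Measurable f) (hfb : ∀ u ∈ Set.Icc 0 T, |f u| ≤ C)
    (hf0 : ∀ u ∈ Set.Icc 0 T, 0 ≤ f u)
    (hSk : ∫ u in Set.Ioc (0:ℝ) T, f u ∂K.measure = 0)
    {t : ℝ} (ht : t ∈ Set.Icc 0 T) :
    ∫ u in Set.Ioc t T, f u ∂K.measure = 0 := by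
  have hsub : Set.Ioc t T ⊆ Set.Ioc 0 T :=
    Set.Ioc_subset_Ioc_left ht.1
  have hsub' : Set.Ioc (0:ℝ) T ⊆ Set.Icc 0 T := Set.Ioc_subset_Icc_self
  have hint : IntegrableOn f (Set.Ioc (0:ℝ) T) K.measure :=
    intOn_aux T K f C hfm hfb hsub'
  have hle : ∫ u in Set.Ioc t T, f u ∂K.measure ≤ ∫ u in Set.Ioc (0:ℝ) T, f u ∂K.measure :=
    setIntegral_mono_set hint
      ((ae_restrict_iff' measurableSet_Ioc).2
        (Filter.Eventually.of_forall fun u hu => hf0 u (hsub' hu)))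
      (HasSubset.Subset.eventuallyLE hsub)
  have hge : 0 ≤ ∫ u in Set.Ioc t T, f u ∂K.measure :=
    setIntegral_nonneg measurableSet_Ioc fun u hu => hf0 u (hsub' (hsub hu))
  linarith [hSk ▸ hle]

/-- The key pathwise inequality in the paper's uniqueness proof for reflected BSDEs:
if `V¹, V²` dominate the obstacle `G` and the Skorokhod minimality conditions
`∫_0^T (Vⁱ − G) dKⁱ = 0` hold for the continuous nondecreasing processes `K¹, K²`
(vanishing at `0`), then `∫_t^T (V¹ − V²) dK¹ − ∫_t^T (V¹ − V²) dK² ≤ 0`. -/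
theorem skorokhod_cross_term_nonpos
    (T : ℝ) (hT : 0 < T)
    (K₁ K₂ : StieltjesFunction ℝ)
    (hK₁c : Continuous (K₁ : ℝ → ℝ)) (hK₂c : Continuous (K₂ : ℝ → ℝ))
    (hK₁0 : K₁ 0 = 0) (hK₂0 : K₂ 0 = 0)
    (V₁ V₂ G : ℝ → ℝ) (M : ℝ)
    (hV₁m : Measurable V₁) (hV₂m : Measurable V₂) (hGm : Measurable G)
    (hV₁b : ∀ u ∈ Set.Icc 0 T, |V₁ u| ≤ M) (hV₂b : ∀ u ∈ Set.Icc 0 T, |V₂ u| ≤ M)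
    (hGb : ∀ u ∈ Set.Icc 0 T, |G u| ≤ M)
    (hV₁G : ∀ u ∈ Set.Icc 0 T, G u ≤ V₁ u) (hV₂G : ∀ u ∈ Set.Icc 0 T, G u ≤ V₂ u)
    (hSk₁ : ∫ u in Set.Ioc (0:ℝ) T, (V₁ u - G u) ∂K₁.measure = 0)
    (hSk₂ : ∫ u in Set.Ioc (0:ℝ) T, (V₂ u - G u) ∂K₂.measure = 0)
    (t : ℝ) (ht : t ∈ Set.Icc 0 T) :
    (∫ u in Set.Ioc t T, (V₁ u - V₂ u) ∂K₁.measure)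
      - ∫ u in Set.Ioc t T, (V₁ u - V₂ u) ∂K₂.measure ≤ 0 := by
  have hsub : Set.Ioc t T ⊆ Set.Icc 0 T :=
    (Set.Ioc_subset_Ioc_left ht.1).trans Set.Ioc_subset_Icc_self
  -- bounds for differences
  have hb₁ : ∀ u ∈ Set.Icc 0 T, |V₁ u - G u| ≤ M + M := fun u hu =>
    (abs_sub _ _).trans (add_le_add (hV₁b u hu) (hGb u hu))
  have hb₂ : ∀ u ∈ Set.Icc 0 T, |V₂ u - G u| ≤ M + M := fun u hu =>
    (abs_sub _ _).trans (add_le_add (hV₂b u hu) (hGb u hu))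
  -- ∫_{t..T} (V₁ - G) dK₁ = 0
  have h₁ : ∫ u in Set.Ioc t T, (V₁ u - G u) ∂K₁.measure = 0 :=
    skorokhod_aux T K₁ _ (M + M) (hV₁m.sub hGm) hb₁
      (fun u hu => sub_nonneg.2 (hV₁G u hu)) hSk₁ ht
  have h₂ : ∫ u in Set.Ioc t T, (V₂ u - G u) ∂K₂.measure = 0 :=
    skorokhod_aux T K₂ _ (M + M) (hV₂m.sub hGm) hb₂
      (fun u hu => sub_nonneg.2 (hV₂G u hu)) hSk₂ ht
  -- integrabilities on Ioc t T
  have i₁₁ : IntegrableOn (fun u => V₁ u - G u) (Set.Ioc t T) K₁.measure :=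
    intOn_aux T K₁ _ (M + M) (hV₁m.sub hGm) hb₁ hsub
  have i₂₁ : IntegrableOn (fun u => V₂ u - G u) (Set.Ioc t T) K₁.measure :=
    intOn_aux T K₁ _ (M + M) (hV₂m.sub hGm) hb₂ hsub
  have i₁₂ : IntegrableOn (fun u => V₁ u - G u) (Set.Ioc t T) K₂.measure :=
    intOn_aux T K₂ _ (M + M) (hV₁m.sub hGm) hb₁ hsub
  have i₂₂ : IntegrableOn (fun u => V₂ u - G u) (Set.Ioc t T) K₂.measure :=
    intOn_aux T K₂ _ (M + M) (hV₂m.sub hGm) hb₂ hsub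
  have split₁ : ∫ u in Set.Ioc t T, (V₁ u - V₂ u) ∂K₁.measure
      = (∫ u in Set.Ioc t T, (V₁ u - G u) ∂K₁.measure)
        - ∫ u in Set.Ioc t T, (V₂ u - G u) ∂K₁.measure := by
    rw [← integral_sub i₁₁ i₂₁]; congr 1; ext u; ring
  have split₂ : ∫ u in Set.Ioc t T, (V₁ u - V₂ u) ∂K₂.measure
      = (∫ u in Set.Ioc t T, (V₁ u - G u) ∂K₂.measure)
        - ∫ u in Set.Ioc t T, (V₂ u - G u) ∂K₂.measure := by
    rw [← integral_sub i₁₂ i₂₂]; congr 1; ext u; ring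
  have n₁ : 0 ≤ ∫ u in Set.Ioc t T, (V₂ u - G u) ∂K₁.measure :=
    setIntegral_nonneg measurableSet_Ioc fun u hu => sub_nonneg.2 (hV₂G u (hsub hu))
  have n₂ : 0 ≤ ∫ u in Set.Ioc t T, (V₁ u - G u) ∂K₂.measure :=
    setIntegral_nonneg measurableSet_Ioc fun u hu => sub_nonneg.2 (hV₁G u (hsub hu))
  rw [split₁, split₂, h₁, h₂]
  linarith
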